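/- If C ⊆ V is a minimal Φ_c-valid control set (i.e., C is Φ_c-valid and no proper subset of C is Φ_c-valid), then every vertex i ∈ C satisfies n_{i,1}(1_C) < n_{i,0}(1_C); that is, the configuration 1_C is absorbing for the down-flip dynamics. -/

import Mathlib

open Finset

variable {V : Type*}

/-- Agreement of a configuration on an (unordered) edge. -/
def agreeFun (x : V → Bool) : Sym2 V → Bool :=
  Sym2.lift ⟨fun a b => x a == x b, fun a b => by show (x a == x b) = (x b == x a); cases x a <;> cases x b <;> rfl⟩

/-- The potential of the majority game: number of edges whose endpoints agree. -/
def Phi [Fintype V] [DecidableEq V] (G : SimpleGraph V) [DecidableRel G.Adj]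
    (x : V → Bool) : ℕ :=
  (G.edgeFinset.filter (fun e => agreeFun x e = true)).card

/-- Number of neighbors of `i` playing action `a` in configuration `x`. -/
def nCount [Fintype V] (G : SimpleGraph V) [DecidableRel G.Adj]
    (x : V → Bool) (i : V) (a : Bool) : ℕ :=
  ((G.neighborFinset i).filter (fun j => x j = a)).card

/-- Majority-game utility: number of neighbors agreeing with `i`. -/
def lamC [Fintype V] (G : SimpleGraph V) [DecidableRel G.Adj]
    (x : V → Bool) (i : V) : ℕ :=
  ((G.neighborFinset i).filter (fun j => x j = x i)).card

/-- Minority-game utility: number of neighbors disagreeing with `i`. -/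
def lamA [Fintype V] (G : SimpleGraph V) [DecidableRel G.Adj]
    (x : V → Bool) (i : V) : ℕ :=
  ((G.neighborFinset i).filter (fun j => x j ≠ x i)).card

/-- `x` is a Nash equilibrium of the minority game. -/
def MinorityNE [Fintype V] [DecidableEq V] (G : SimpleGraph V) [DecidableRel G.Adj]
    (x : V → Bool) : Prop :=
  ∀ (i : V) (a : Bool), lamA G (Function.update x i a) i ≤ lamA G x i

/-- A monotone crusade from `C`: starts at the indicator of `C`, ends at all-ones,
and at each step one coordinate outside `C` is flipped from `0` to `1`. -/
def IsCrusade [DecidableEq V] (C : Finset V) (m : ℕ) (xs : ℕ → V → Bool) : Prop :=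
  xs 0 = (fun v => decide (v ∈ C)) ∧ xs m = (fun _ => true) ∧
    ∀ k < m, ∃ i, i ∉ C ∧ xs k i = false ∧ xs (k + 1) = Function.update (xs k) i true

/-- `C` is a `Φ_c`-valid control set: there is a `Φ_c`-adapted monotone crusade from `C`. -/
def ValidControlSet [Fintype V] [DecidableEq V] (G : SimpleGraph V) [DecidableRel G.Adj]
    (C : Finset V) : Prop :=
  ∃ m xs, IsCrusade C m xs ∧ ∀ k < m, Phi G (xs k) ≤ Phi G (xs (k + 1))

/-- `x ∈ Z`: reachable from the all-ones configuration by allowed down-flips. -/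
def InZ [Fintype V] [DecidableEq V] (G : SimpleGraph V) [DecidableRel G.Adj]
    (x : V → Bool) : Prop :=
  ∃ m, ∃ ys : ℕ → V → Bool, ys 0 = (fun _ => true) ∧ ys m = x ∧
    ∀ k < m, ∃ i, ys k i = true ∧ nCount G (ys k) i false ≤ nCount G (ys k) i true ∧
      ys (k + 1) = Function.update (ys k) i false

/-- `‖x‖₁`: number of coordinates equal to `1`. -/
def norm1 [Fintype V] (x : V → Bool) : ℕ :=
  (Finset.univ.filter (fun v => x v = true)).card

section Aux
variable [Fintype V] [DecidableEq V] (G : SimpleGraph V) [DecidableRel G.Adj]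

lemma agree_update_of_not_mem (x : V → Bool) (i : V) (a : Bool) (e : Sym2 V)
    (he : i ∉ e) : agreeFun (Function.update x i a) e = agreeFun x e := by
  induction e using Sym2.ind with
  | _ u v =>
    simp only [Sym2.mem_iff, not_or] at he
    simp [agreeFun, Function.update_of_ne (fun h => he.1 h.symm),
      Function.update_of_ne (fun h => he.2 h.symm)]

lemma nCount_update_self (x : V → Bool) (i : V) (a b : Bool) :
    nCount G (Function.update x i a) i b = nCount G x i b := by
  unfold nCount
  congr 1
  apply Finset.filter_congr
  intro j hj
  rw [Function.update_of_ne ((G.mem_neighborFinset i j).mp hj).ne']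

lemma phi_split (x : V → Bool) (i : V) :
    Phi G x = ((G.edgeFinset.filter (fun e => agreeFun x e = true)).filter
        (fun e => i ∉ e)).card + nCount G x i (x i) := by
  unfold Phi
  rw [← Finset.card_filter_add_card_filter_not
    (s := G.edgeFinset.filter (fun e => agreeFun x e = true)) (p := fun e => i ∉ e)]
  congr 1
  unfold nCount
  symm
  apply Finset.card_nbij (i := fun j => s(i, j))
  · intro j hj
    simp only [coe_filter, Set.mem_setOf_eq, Finset.mem_filter, SimpleGraph.mem_neighborFinset] at hj
    simp only [coe_filter, Set.mem_setOf_eq, Finset.mem_filter, SimpleGraph.mem_edgeFinset, SimpleGraph.mem_edgeSet,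
      not_not, Sym2.mem_iff]
    exact ⟨⟨hj.1, by simp [agreeFun, hj.2]⟩, Or.inl trivial⟩
  · intro a _ b _ hab
    exact (Sym2.congr_right).mp hab
  · intro e he
    simp only [coe_filter, Set.mem_setOf_eq, Finset.mem_filter, not_not] at he
    obtain ⟨⟨he', hag⟩, hie⟩ := he
    obtain ⟨j, rfl⟩ := Sym2.mem_iff_exists.mp hie
    refine ⟨j, ?_, rfl⟩
    simp only [coe_filter, Set.mem_setOf_eq, SimpleGraph.mem_neighborFinset]
    rw [SimpleGraph.mem_edgeFinset, SimpleGraph.mem_edgeSet] at he'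
    refine ⟨he', ?_⟩
    simp only [agreeFun, Sym2.lift_mk] at hag
    exact (beq_iff_eq.mp hag).symm

lemma phi_update (x : V → Bool) (i : V) (a : Bool) :
    Phi G (Function.update x i a) + nCount G x i (x i)
      = Phi G x + nCount G x i a := by
  rw [phi_split G (Function.update x i a) i, phi_split G x i,
    Function.update_self, nCount_update_self]
  have h : (G.edgeFinset.filter (fun e => agreeFun (Function.update x i a) e = true)).filter (fun e => i ∉ e)
      = (G.edgeFinset.filter (fun e => agreeFun x e = true)).filter (fun e => i ∉ e) := by
    ext e
    simp only [Finset.mem_filter]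
    constructor <;> rintro ⟨⟨he, hag⟩, hni⟩ <;>
      exact ⟨⟨he, by rw [agree_update_of_not_mem x i a e hni] at *; assumption⟩, hni⟩
  rw [h]; ring

end Aux

/-- if `C` is a minimal `Φ_c`-valid control set, then `1_C` is absorbing for
the down-flip dynamics: every `i ∈ C` has `n_{i,1}(1_C) < n_{i,0}(1_C)`. -/
theorem minimal_validControlSet_absorbing [Fintype V] [DecidableEq V]
    (G : SimpleGraph V) [DecidableRel G.Adj] (C : Finset V)
    (hC : ValidControlSet G C) (hmin : ∀ D ⊂ C, ¬ ValidControlSet G D) :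
    ∀ i ∈ C, nCount G (fun v => decide (v ∈ C)) i true
                < nCount G (fun v => decide (v ∈ C)) i false := by
  intro i hi
  by_contra h
  push_neg at h
  apply hmin (C.erase i) (Finset.erase_ssubset hi)
  obtain ⟨m, xs, ⟨h0, hm, hstep⟩, hphi⟩ := hC
  set xC : V → Bool := fun v => decide (v ∈ C) with hxC
  set xD : V → Bool := fun v => decide (v ∈ C.erase i) with hxD
  have hDi : xD i = false := by simp [hxD]
  have hupd : Function.update xD i true = xC := by
    funext v
    by_cases hv : v = i
    · subst hv; simp [hxC, hi]
    · simp [Function.update_of_ne hv, hxD, hxC, Finset.mem_erase, hv]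
  refine ⟨m + 1, fun k => if k = 0 then xD else xs (k - 1), ⟨by simp only [if_pos rfl]; rfl, by simp [hm], ?_⟩, ?_⟩
  · intro k hk
    cases k with
    | zero =>
      refine ⟨i, by simp, by simpa using hDi, ?_⟩
      funext v
      simp [hupd, h0]
    | succ k =>
      obtain ⟨j, hjC, hj0, hj1⟩ := hstep k (by omega)
      refine ⟨j, fun hjD => hjC (Finset.mem_of_mem_erase hjD), by simpa using hj0, ?_⟩
      simpa using hj1
  · intro k hk
    cases k with
    | zero =>
      have key := phi_update G xD i true
      rw [hDi, hupd] at key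
      have h1 : nCount G xC i false = nCount G xD i false := by
        rw [← hupd, nCount_update_self]
      have h2 : nCount G xC i true = nCount G xD i true := by
        rw [← hupd, nCount_update_self]
      have : Phi G xD ≤ Phi G xC := by omega
      simpa [h0] using this
    | succ k => simpa using hphi k (by omega)
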